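/- If a rectangle is tiled by N congruent copies of a convex polygon with q vertices, and F, H, ℏ, |𝓕|, |𝓗| are defined as in the context, then (2|𝓕| + |𝓗| + 2)/(F + H + ℏ) = (q-2)/q; equivalently, 2|𝓕|π + |𝓗|π + 2π = N(q-2)π and F + H + ℏ = Nq. -/
import Mathlib


open Real Finset

lemma swap_sum {V : Type*} [Fintype V] [DecidableEq V] {N : ℕ}
    (I : V → Finset (Fin N)) {M : Type*} [AddCommMonoid M] (f : Fin N → V → M) :
    ∑ w : V, ∑ j ∈ I w, f j w
      = ∑ j : Fin N, ∑ w ∈ Finset.univ.filter (fun w : V => j ∈ I w), f j w := by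
  have h1 : ∀ w : V, ∑ j ∈ I w, f j w = ∑ j : Fin N, if j ∈ I w then f j w else 0 := by
    intro w
    rw [Finset.sum_ite_mem, Finset.univ_inter]
  simp_rw [h1, Finset.sum_filter]
  exact Finset.sum_comm

theorem stmt_0 {V : Type*} [Fintype V] [DecidableEq V]
    (N q : ℕ) (hq : 3 ≤ q)
    (I : V → Finset (Fin N))
    (θ : Fin N → V → ℝ)
    (hq_vertices : ∀ j : Fin N,
      (Finset.univ.filter (fun w : V => j ∈ I w)).card = q)
    (hangle_sum : ∀ j : Fin N,
      ∑ w ∈ Finset.univ.filter (fun w : V => j ∈ I w), θ j w = ((q : ℝ) - 2) * π)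
    (VΩ F H : Finset V)
    (hdisj1 : Disjoint VΩ F) (hdisj2 : Disjoint VΩ H) (hdisj3 : Disjoint F H)
    (hcover : VΩ ∪ F ∪ H = Finset.univ)
    (hVΩcard : VΩ.card = 4)
    (hF : ∀ w ∈ F, ∑ j ∈ I w, θ j w = 2 * π)
    (hH : ∀ w ∈ H, ∑ j ∈ I w, θ j w = π)
    (hVΩ : ∀ w ∈ VΩ, ∑ j ∈ I w, θ j w = π / 2) :
    2 * (F.card : ℝ) * π + (H.card : ℝ) * π + 2 * π = (N : ℝ) * ((q : ℝ) - 2) * π ∧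
    (∑ w ∈ F, (I w).card) + (∑ w ∈ H, (I w).card) + (∑ w ∈ VΩ, (I w).card) = N * q := by
  have hsplit : ∀ {M : Type} [AddCommMonoid M] (g : V → M),
      ∑ w : V, g w = ∑ w ∈ VΩ, g w + ∑ w ∈ F, g w + ∑ w ∈ H, g w := by
    intro M _ g
    rw [← hcover, Finset.sum_union, Finset.sum_union hdisj1]
    rw [Finset.disjoint_union_left]
    exact ⟨hdisj2, hdisj3⟩
  constructor
  · have h1 : ∑ w : V, ∑ j ∈ I w, θ j w = (N : ℝ) * ((q : ℝ) - 2) * π := by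
      rw [swap_sum]
      rw [Finset.sum_congr rfl (fun j _ => hangle_sum j), Finset.sum_const,
        Finset.card_univ, Fintype.card_fin, nsmul_eq_mul]
      ring
    rw [hsplit (fun w => ∑ j ∈ I w, θ j w)] at h1
    rw [Finset.sum_congr rfl hVΩ, Finset.sum_congr rfl hF, Finset.sum_congr rfl hH] at h1
    simp only [Finset.sum_const, nsmul_eq_mul, hVΩcard] at h1
    rw [← h1]
    ring
  · have h2 : ∑ w : V, (I w).card = N * q := by
      calc ∑ w : V, (I w).card = ∑ w : V, ∑ _j ∈ I w, 1 :=
            Finset.sum_congr rfl (fun w _ => Finset.card_eq_sum_ones (I w))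
        _ = ∑ j : Fin N, ∑ _w ∈ Finset.univ.filter (fun w : V => j ∈ I w), 1 :=
            swap_sum I (fun _ _ => 1)
        _ = ∑ j : Fin N, q := Finset.sum_congr rfl (fun j _ => by
            rw [← Finset.card_eq_sum_ones, hq_vertices])
        _ = N * q := by rw [Finset.sum_const, Finset.card_univ, Fintype.card_fin, smul_eq_mul]
    rw [hsplit (fun w => (I w).card)] at h2
    omega
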